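/- The permutahedron of type B satisfies Perm(B_n) = Perm(A_{2n-1}) ∩ ⋂_{i∈[n-1]} H_i^B, where Perm(B_n) = conv{M(σ) : σ ∈ W_n}, Perm(A_{2n-1}) = conv{M(σ) : σ ∈ S_{2n}}, and H_i^B = {x ∈ ℝ^{2n} : x_i + x_{2n+1−i} = 2n+1}. -/

import Mathlib

private def halfMap (n : ℕ) : Fin n × Bool → Fin (2 * n) := fun q =>
  if q.2 then ⟨q.1, by have := q.1.isLt; omega⟩
  else ⟨2 * n - 1 - q.1, by have := q.1.isLt; omega⟩

private lemma halfMap_inj (n : ℕ) : Function.Injective (halfMap n) := by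
  rintro ⟨p, b⟩ ⟨q, c⟩ h
  have hp := p.isLt; have hq := q.isLt
  cases b <;> cases c <;>
    simp only [halfMap, if_true, if_false, Fin.mk.injEq, Bool.false_eq_true] at h <;>
    · refine Prod.ext (Fin.ext ?_) ?_ <;> simp_all <;> omega

private noncomputable def halfEquiv (n : ℕ) : (Fin n × Bool) ≃ Fin (2 * n) :=
  Equiv.ofBijective (halfMap n)
    ((Fintype.bijective_iff_injective_and_card _).2 ⟨halfMap_inj n, by simp [mul_comm]⟩)

private lemma halfEquiv_rev (n : ℕ) (p : Fin n) (b : Bool) :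
    (halfEquiv n (p, b)).rev = halfEquiv n (p, !b) := by
  have hp := p.isLt
  cases b <;>
  · apply Fin.ext
    simp only [halfEquiv, Equiv.ofBijective_apply, halfMap, Fin.val_rev, Bool.not_true,
      Bool.not_false, if_true, if_false]
    simp only [Bool.false_eq_true, if_false, if_true]
    omega

private lemma halfEquiv_symm_rev (n : ℕ) (v : Fin (2 * n)) :
    (halfEquiv n).symm v.rev = (((halfEquiv n).symm v).1, !((halfEquiv n).symm v).2) := by
  set e := halfEquiv n
  have h1 : v = e (((e.symm v).1, (e.symm v).2)) := by
    rw [Prod.mk.eta, e.apply_symm_apply]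
  conv_lhs => rw [h1]
  rw [halfEquiv_rev, e.symm_apply_apply]

private lemma rev_ne (n : ℕ) (v : Fin (2 * n)) : v.rev ≠ v := by
  intro h
  have h2 := congrArg Fin.val h
  rw [Fin.val_rev] at h2
  have := v.isLt
  omega

/-- The key combinatorial lemma: for any permutation σ of `Fin (2*n)` there are two
"signed permutations" π₁, π₂ whose coordinate sums match those of σ and its mirror. -/
private lemma exists_W_pair (n : ℕ) (σ : Equiv.Perm (Fin (2 * n))) :
    ∃ π₁ π₂ : Equiv.Perm (Fin (2 * n)),
      (∀ a, π₁ a.rev = (π₁ a).rev) ∧ (∀ a, π₂ a.rev = (π₂ a).rev) ∧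
      (∀ a, ((π₁ a : ℕ) + (π₂ a : ℕ)) = (σ a : ℕ) + ((σ a.rev).rev : ℕ)) := by
  classical
  set e := halfEquiv n with he
  set u : (Fin n × Bool) ≃ (Fin n × Bool) := e.trans (σ.trans e.symm) with hu
  set sc : Fin n × Bool → Fin n := fun q => (u q).1 with hsc
  set t : Fin n → Finset (Fin n) := fun p => {sc (p, true), sc (p, false)} with ht
  -- Hall's condition
  have hall : ∀ s : Finset (Fin n), s.card ≤ (s.biUnion t).card := by
    intro s
    have h2 : (s ×ˢ (Finset.univ : Finset Bool)).card ≤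
        ((s.biUnion t) ×ˢ (Finset.univ : Finset Bool)).card := by
      apply Finset.card_le_card_of_injOn (fun q => u q)
      · rintro ⟨p, b⟩ hq
        rw [Finset.mem_coe, Finset.mem_product] at hq ⊢
        refine ⟨Finset.mem_biUnion.2 ⟨p, hq.1, ?_⟩, Finset.mem_univ _⟩
        have : (u (p, b)).1 = sc (p, b) := rfl
        rw [ht]
        cases b <;> simp [this, Finset.mem_insert]
      · exact fun a _ b _ h => u.injective h
    rw [Finset.card_product, Finset.card_product, Finset.card_univ, Fintype.card_bool] at h2
    omega
  obtain ⟨h, hinj, hmem⟩ := (Finset.all_card_le_biUnion_card_iff_exists_injective t).1 hall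
  have hbij : Function.Bijective h := Finite.injective_iff_bijective.1 hinj
  set χ : Fin n → Bool := fun p => decide (sc (p, true) = h p) with hχdef
  have hχ : ∀ p, sc (p, χ p) = h p := by
    intro p
    by_cases hc : sc (p, true) = h p
    · simp [hχdef, hc]
    · have hm := hmem p
      rw [ht] at hm
      simp only [Finset.mem_insert, Finset.mem_singleton] at hm
      rcases hm with h1 | h2
      · exact absurd h1.symm hc
      · simp [hχdef, hc, h2.symm]
  set other : Fin n → Fin n := fun p => sc (p, !χ p) with hother_def
  have hcount : ∀ (q r : Fin n × Bool), q ≠ r → sc q = sc r → (u q).2 ≠ (u r).2 := by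
    intro q r hqr hscq hb
    exact hqr (u.injective (Prod.ext hscq hb))
  have hother : Function.Injective other := by
    intro p q hpq
    by_contra hne
    obtain ⟨r, hr⟩ := hbij.2 (other p)
    have hscr : sc (r, χ r) = other p := (hχ r).trans hr
    have d1 : ((p, !χ p) : Fin n × Bool) ≠ (q, !χ q) := by
      intro hE; exact hne (congrArg Prod.fst hE)
    have d2 : ((r, χ r) : Fin n × Bool) ≠ (p, !χ p) := by
      intro hE
      have h1 : r = p := congrArg Prod.fst hE
      have h2 : χ r = !χ p := congrArg Prod.snd hE
      rw [h1] at h2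
      simp at h2
    have d3 : ((r, χ r) : Fin n × Bool) ≠ (q, !χ q) := by
      intro hE
      have h1 : r = q := congrArg Prod.fst hE
      have h2 : χ r = !χ q := congrArg Prod.snd hE
      rw [h1] at h2
      simp at h2
    have t1 := hcount _ _ d1 hpq
    have t2 := hcount _ _ d2 (hscr.trans rfl)
    have t3 := hcount _ _ d3 (hscr.trans hpq)
    revert t1 t2 t3
    cases (u (p, !χ p)).2 <;> cases (u (q, !χ q)).2 <;> cases (u (r, χ r)).2 <;> simp
  -- the two choice-permutations
  set ρ : (Fin n → Bool) → Fin (2 * n) → Fin (2 * n) := fun c v =>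
    if c ((e.symm v).1) = (e.symm v).2 then σ v else (σ v.rev).rev with hρ
  have hrevsymm : ∀ v : Fin (2 * n), (e.symm v.rev) = ((e.symm v).1, !(e.symm v).2) :=
    halfEquiv_symm_rev n
  have hequiv : ∀ (c : Fin n → Bool) (v : Fin (2 * n)), ρ c v.rev = (ρ c v).rev := by
    intro c v
    rw [hρ]
    simp only [hrevsymm v]
    by_cases hc : c ((e.symm v).1) = (e.symm v).2
    · rw [if_pos hc, if_neg (by simp [hc]), Fin.rev_rev]
    · rw [if_neg hc, if_pos (by cases hcv : c ((e.symm v).1) <;>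
        cases hbv : (e.symm v).2 <;> simp_all), Fin.rev_rev]
  have hclsσ : ∀ v : Fin (2 * n), (e.symm (σ v)).1 = sc ((e.symm v).1, (e.symm v).2) := by
    intro v
    rw [hsc]
    show _ = (u ((e.symm v).1, (e.symm v).2)).1
    rw [Prod.mk.eta, hu]
    simp [Equiv.trans_apply]
  have hcls : ∀ (c : Fin n → Bool) (v : Fin (2 * n)),
      (e.symm (ρ c v)).1 = sc ((e.symm v).1, c ((e.symm v).1)) := by
    intro c v
    simp only [hρ]
    by_cases hc : c ((e.symm v).1) = (e.symm v).2
    · rw [if_pos hc, hclsσ v, hc]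
    · rw [if_neg hc]
      have h1 : (e.symm ((σ v.rev).rev)).1 = (e.symm (σ v.rev)).1 := by
        rw [hrevsymm (σ v.rev)]
      rw [h1, hclsσ v.rev, hrevsymm v]
      congr 1
      cases hcv : c ((e.symm v).1) <;> cases hbv : (e.symm v).2 <;> simp_all
  have hinjρ : ∀ c : Fin n → Bool,
      Function.Injective (fun p => sc (p, c p)) → Function.Injective (ρ c) := by
    intro c hc v w hvw
    have h1 : (e.symm v).1 = (e.symm w).1 := by
      apply hc
      show sc ((e.symm v).1, c (e.symm v).1) = sc ((e.symm w).1, c (e.symm w).1)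
      rw [← hcls c v, ← hcls c w, hvw]
    by_cases h2 : (e.symm v).2 = (e.symm w).2
    · have : e.symm v = e.symm w := Prod.ext h1 h2
      exact e.symm.injective this
    · exfalso
      have h3 : e.symm w = e.symm v.rev := by
        rw [hrevsymm v]
        refine Prod.ext h1.symm ?_
        show (e.symm w).2 = !(e.symm v).2
        cases hcv : (e.symm v).2 <;> cases hbv : (e.symm w).2 <;> simp_all
      have h4 : w = v.rev := e.symm.injective h3
      rw [h4, hequiv c v] at hvw
      exact rev_ne n (ρ c v) (by rw [← hvw])
  have hbij1 : Function.Bijective (ρ χ) := by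
    apply Finite.injective_iff_bijective.1
    apply hinjρ
    have : (fun p => sc (p, χ p)) = h := funext hχ
    rw [this]; exact hinj
  have hbij2 : Function.Bijective (ρ (fun p => !χ p)) := by
    exact Finite.injective_iff_bijective.1 (hinjρ (fun p => !χ p) hother)
  have bool_flip : ∀ x y : Bool, ¬x = y → (!x) = y := by decide
  have bool_flip2 : ∀ x y : Bool, x = y → ¬((!x) = y) := by decide
  refine ⟨Equiv.ofBijective _ hbij1, Equiv.ofBijective _ hbij2, ?_, ?_, ?_⟩
  · intro a
    simp only [Equiv.ofBijective_apply]
    exact hequiv χ a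
  · intro a
    simp only [Equiv.ofBijective_apply]
    exact hequiv (fun p => !χ p) a
  · intro a
    simp only [Equiv.ofBijective_apply, hρ]
    by_cases hc : χ ((e.symm a).1) = (e.symm a).2
    · rw [if_pos hc, if_neg (bool_flip2 _ _ hc)]
    · rw [if_neg hc, if_pos (bool_flip _ _ hc)]
      omega

private lemma gaussFin (N : ℕ) : ∑ v : Fin N, ((v : ℝ) + 1) = N * (N + 1) / 2 := by
  rw [Fin.sum_univ_eq_sum_range (fun i => (i : ℝ) + 1)]
  induction N with
  | zero => simp
  | succ m ih => rw [Finset.sum_range_succ, ih]; push_cast; ring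

/-- `Perm(Bₙ) = Perm(A_{2n-1}) ∩ ⋂_{i ∈ [n-1]} H_i^B`, where
`Perm(Bₙ) = conv{M(σ) : σ ∈ Wₙ}`, `Perm(A_{2n-1}) = conv{M(σ) : σ ∈ S_{2n}}`, and
`H_i^B = {x ∈ ℝ^{2n} : x_i + x_{2n+1−i} = 2n+1}`. -/
theorem typeB_permutahedron_eq_intersection (n : ℕ) :
    convexHull ℝ {x : Fin (2 * n) → ℝ | ∃ σ : Equiv.Perm (Fin (2 * n)),
        (∀ a : Fin (2 * n), ((σ a : ℕ) + 1) + ((σ a.rev : ℕ) + 1) = 2 * n + 1) ∧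
        x = fun a => (σ a : ℝ) + 1} =
      (convexHull ℝ {x : Fin (2 * n) → ℝ | ∃ σ : Equiv.Perm (Fin (2 * n)),
          x = fun a => (σ a : ℝ) + 1}) ∩
        {x : Fin (2 * n) → ℝ | ∀ a : Fin (2 * n), (a : ℕ) < n - 1 →
          x a + x a.rev = 2 * n + 1} := by
  apply Set.Subset.antisymm
  · apply convexHull_min
    · rintro x ⟨σ, hσ, rfl⟩
      refine ⟨subset_convexHull ℝ _ ⟨σ, rfl⟩, ?_⟩
      intro a _
      simp only
      exact_mod_cast hσ a
    · refine Convex.inter (convex_convexHull ℝ _) ?_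
      intro x hx y hy a b ha hb hab
      intro i hi
      have h1 := hx i hi
      have h2 := hy i hi
      simp only [Pi.add_apply, Pi.smul_apply, smul_eq_mul]
      linear_combination a * h1 + b * h2 + (2 * (n : ℝ) + 1) * hab
  · rintro x ⟨hxA, hxH⟩
    rw [convexHull_eq] at hxA
    obtain ⟨ι, tf, w, z, hw0, hw1, hz, hcm⟩ := hxA
    rw [Finset.centerMass_eq_of_sum_1 _ _ hw1] at hcm
    classical
    choose σs hσs using hz
    set σ' : ι → Equiv.Perm (Fin (2 * n)) := fun i => if h : i ∈ tf then σs i h else 1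
      with hσ'def
    have hz' : ∀ i ∈ tf, z i = fun a => ((σ' i) a : ℝ) + 1 := by
      intro i hi
      rw [hσ'def]
      simp only [dif_pos hi]
      exact hσs i hi
    have hxa : ∀ a, x a = ∑ i ∈ tf, w i * (((σ' i) a : ℝ) + 1) := by
      intro a
      rw [← hcm, Finset.sum_apply]
      refine Finset.sum_congr rfl fun i hi => ?_
      rw [Pi.smul_apply, hz' i hi, smul_eq_mul]
    have hsum : ∑ a : Fin (2 * n), x a = n * (2 * n + 1) := by
      have hone : ∀ i : ι, ∑ a : Fin (2 * n), (((σ' i) a : ℝ) + 1) = n * (2 * n + 1) := by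
        intro i
        have h := Equiv.sum_comp (σ' i) (fun v : Fin (2 * n) => (v : ℝ) + 1)
        rw [h, gaussFin]
        push_cast
        ring
      calc ∑ a : Fin (2 * n), x a
          = ∑ a : Fin (2 * n), ∑ i ∈ tf, w i * (((σ' i) a : ℝ) + 1) :=
            Finset.sum_congr rfl fun a _ => hxa a
        _ = ∑ i ∈ tf, ∑ a : Fin (2 * n), w i * (((σ' i) a : ℝ) + 1) := Finset.sum_comm
        _ = ∑ i ∈ tf, w i * (n * (2 * n + 1)) := by
            refine Finset.sum_congr rfl fun i _ => ?_
            rw [← Finset.mul_sum, hone i]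
        _ = n * (2 * n + 1) := by rw [← Finset.sum_mul, hw1, one_mul]
    have hpair : ∀ a : Fin (2 * n), x a + x a.rev = 2 * n + 1 := by
      rcases Nat.eq_zero_or_pos n with hn0 | hn0
      · intro a
        exact absurd a.isLt (by omega)
      set T : Fin (2 * n) → ℝ := fun a => x a + x a.rev - (2 * (n : ℝ) + 1) with hT
      have hTsym : ∀ a, T a.rev = T a := by
        intro a
        simp only [hT, Fin.rev_rev]
        ring
      have hT0 : ∀ a : Fin (2 * n), (a : ℕ) < n - 1 → T a = 0 := by
        intro a ha
        simp only [hT]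
        rw [hxH a ha]
        ring
      have hT0' : ∀ a : Fin (2 * n), (a : ℕ) ≠ n - 1 → (a : ℕ) ≠ n → T a = 0 := by
        intro a h1 h2
        by_cases h3 : (a : ℕ) < n - 1
        · exact hT0 a h3
        · have h4 : ((a.rev : ℕ)) < n - 1 := by
            rw [Fin.val_rev]
            have := a.isLt
            omega
          rw [← hTsym a]
          exact hT0 a.rev h4
      have hi1lt : n - 1 < 2 * n := by omega
      have hi2lt : n < 2 * n := by omega
      set i₁ : Fin (2 * n) := ⟨n - 1, hi1lt⟩ with hi₁
      set i₂ : Fin (2 * n) := ⟨n, hi2lt⟩ with hi₂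
      have hrev12 : i₁.rev = i₂ := by
        apply Fin.ext
        rw [Fin.val_rev]
        simp only [hi₁, hi₂]
        omega
      have hTsum : ∑ a : Fin (2 * n), T a = 0 := by
        have hxr : ∑ a : Fin (2 * n), x a.rev = ∑ a : Fin (2 * n), x a := by
          have h := Equiv.sum_comp (Fin.revPerm : Equiv.Perm (Fin (2 * n))) x
          simpa using h
        simp only [hT]
        rw [Finset.sum_sub_distrib, Finset.sum_add_distrib, hxr, hsum, Finset.sum_const,
          Finset.card_univ, Fintype.card_fin, nsmul_eq_mul]
        push_cast
        ring
      have hne12 : i₁ ≠ i₂ := by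
        intro h
        have := congrArg Fin.val h
        simp only [hi₁, hi₂] at this
        omega
      have hpairsum : ∑ a : Fin (2 * n), T a = T i₁ + T i₂ := by
        rw [← Finset.sum_subset (Finset.subset_univ ({i₁, i₂} : Finset (Fin (2 * n))))]
        · rw [Finset.sum_insert (by simpa using hne12), Finset.sum_singleton]
        · intro a _ ha
          simp only [Finset.mem_insert, Finset.mem_singleton] at ha
          push_neg at ha
          exact hT0' a (fun hv => ha.1 (Fin.ext (by rw [hv]))) (fun hv => ha.2 (Fin.ext (by rw [hv])))
      have hTi2 : T i₂ = T i₁ := by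
        rw [← hrev12]
        exact hTsym i₁
      have hTi1 : T i₁ = 0 := by
        rw [hpairsum, hTi2] at hTsum
        linarith
      intro a
      have hTa : T a = 0 := by
        by_cases h1 : (a : ℕ) = n - 1
        · have : a = i₁ := Fin.ext (by rw [h1])
          rw [this]
          exact hTi1
        · by_cases h2 : (a : ℕ) = n
          · have : a = i₂ := Fin.ext (by rw [h2])
            rw [this, hTi2]
            exact hTi1
          · exact hT0' a h1 h2
      simp only [hT] at hTa
      linarith
    have hwmem : ∀ i ∈ tf,
        (fun a => ((((σ' i) a : ℝ) + 1) + ((2 * (n : ℝ) + 1) - (((σ' i) a.rev : ℝ) + 1))) / 2)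
          ∈ convexHull ℝ {x : Fin (2 * n) → ℝ | ∃ σ : Equiv.Perm (Fin (2 * n)),
            (∀ a : Fin (2 * n), ((σ a : ℕ) + 1) + ((σ a.rev : ℕ) + 1) = 2 * n + 1) ∧
            x = fun a => (σ a : ℝ) + 1} := by
      intro i _
      obtain ⟨π₁, π₂, he1, he2, hsum12⟩ := exists_W_pair n (σ' i)
      have hWc : ∀ (π : Equiv.Perm (Fin (2 * n))), (∀ a, π a.rev = (π a).rev) →
          (fun a => ((π a : ℝ) + 1)) ∈ {x : Fin (2 * n) → ℝ | ∃ σ : Equiv.Perm (Fin (2 * n)),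
            (∀ a : Fin (2 * n), ((σ a : ℕ) + 1) + ((σ a.rev : ℕ) + 1) = 2 * n + 1) ∧
            x = fun a => (σ a : ℝ) + 1} := by
        intro π hπ
        refine ⟨π, fun a => ?_, rfl⟩
        rw [hπ a, Fin.val_rev]
        have := (π a).isLt
        omega
      have hmid := (convex_convexHull ℝ _) (subset_convexHull ℝ _ (hWc π₁ he1))
        (subset_convexHull ℝ _ (hWc π₂ he2)) (by norm_num : (0:ℝ) ≤ 1/2)
        (by norm_num : (0:ℝ) ≤ 1/2) (by norm_num : (1:ℝ)/2 + 1/2 = 1)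
      convert hmid using 1
      funext a
      have hs := hsum12 a
      have hv : (((σ' i) a.rev).rev : ℕ) = 2 * n - 1 - ((σ' i) a.rev : ℕ) := by
        rw [Fin.val_rev]
        omega
      have hlt : ((σ' i) a.rev : ℕ) < 2 * n := ((σ' i) a.rev).isLt
      have hs' : ((π₁ a : ℕ)) + (π₂ a : ℕ) + ((σ' i) a.rev : ℕ) + 1 = ((σ' i) a : ℕ) + 2 * n := by
        omega
      have hsR : ((π₁ a : ℝ)) + (π₂ a : ℝ) + ((σ' i) a.rev : ℝ) + 1
          = ((σ' i) a : ℝ) + 2 * n := by exact_mod_cast hs'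
      simp only [Pi.add_apply, Pi.smul_apply, smul_eq_mul]
      linarith
    have hxeq : ∑ i ∈ tf, w i •
        (fun a => ((((σ' i) a : ℝ) + 1) + ((2 * (n : ℝ) + 1) - (((σ' i) a.rev : ℝ) + 1))) / 2)
        = x := by
      funext a
      rw [Finset.sum_apply]
      have step : ∀ i ∈ tf, (w i • (fun a =>
          ((((σ' i) a : ℝ) + 1) + ((2 * (n : ℝ) + 1) - (((σ' i) a.rev : ℝ) + 1))) / 2)) a
          = (w i * (((σ' i) a : ℝ) + 1) + (2 * (n : ℝ) + 1) * w i
            - w i * (((σ' i) a.rev : ℝ) + 1)) / 2 := by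
        intro i _
        simp only [Pi.smul_apply, smul_eq_mul]
        ring
      rw [Finset.sum_congr rfl step, ← Finset.sum_div, Finset.sum_sub_distrib,
        Finset.sum_add_distrib, ← Finset.mul_sum, ← hxa a, ← hxa a.rev, hw1, mul_one]
      have := hpair a
      linarith
    rw [← hxeq]
    exact Convex.sum_mem (convex_convexHull ℝ _) hw0 hw1 hwmem
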